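/- Let R be a commutative ring, f : A' → B' and g : B → B' homomorphisms of R-algebras with A = A' ×_{B'} B their fiber product. Assume B' is flat as an R-module, the map B × A' → B', (b, a') ↦ g(b) − f(a'), is surjective, and both A' and B are flat R-modules. Then A is a flat R-module. -/

import Mathlib

open TensorProduct LinearMap

lemma Module.Flat.prod' {R M N : Type*} [CommRing R] [AddCommGroup M] [Module R M]
    [AddCommGroup N] [Module R N] [Module.Flat R M] [Module.Flat R N] :
    Module.Flat R (M × N) := by
  rw [Module.Flat.iff_lTensor_injective']
  intro I
  have heq : (lTensor (M × N) I.subtype) =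
      ((TensorProduct.prodLeft R R M N R).symm.toLinearMap ∘ₗ
        (prodMap (lTensor M I.subtype) (lTensor N I.subtype)) ∘ₗ
        (TensorProduct.prodLeft R R M N I).toLinearMap) := by
    apply TensorProduct.ext'
    rintro ⟨m, n⟩ i
    simp
  rw [heq]
  exact (TensorProduct.prodLeft R R M N R).symm.injective.comp
    (((Module.Flat.lTensor_preserves_injective_linearMap I.subtype
        I.injective_subtype).prodMap
      (Module.Flat.lTensor_preserves_injective_linearMap I.subtype
        I.injective_subtype)).comp (TensorProduct.prodLeft R R M N I).injective)

open Function in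
theorem lTensor_injective_of_exact_of_exact_of_rTensor_injective' {R : Type*} [CommRing R]
    {M₁ M₂ M₃ N₁ N₂ N₃}
    [AddCommGroup M₁] [Module R M₁] [AddCommGroup M₂] [Module R M₂] [AddCommGroup M₃] [Module R M₃]
    [AddCommGroup N₁] [Module R N₁] [AddCommGroup N₂] [Module R N₂] [AddCommGroup N₃] [Module R N₃]
    {f₁ : M₁ →ₗ[R] M₂} {f₂ : M₂ →ₗ[R] M₃} {g₁ : N₁ →ₗ[R] N₂} {g₂ : N₂ →ₗ[R] N₃}
    (hfexact : Exact f₁ f₂) (hfsurj : Surjective f₂)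
    (hgexact : Exact g₁ g₂) (hgsurj : Surjective g₂)
    (hfinj : Injective (f₁.rTensor N₃)) (hginj : Injective (g₁.lTensor M₂)) :
    Injective (g₁.lTensor M₃) := by
  rw [injective_iff_map_eq_zero]
  intro x hx
  obtain ⟨x, rfl⟩ := f₂.rTensor_surjective N₁ hfsurj x
  have : f₂.rTensor N₂ (g₁.lTensor M₂ x) = 0 := by
    rw [← hx, ← LinearMap.comp_apply, ← LinearMap.comp_apply, LinearMap.rTensor_comp_lTensor,
      LinearMap.lTensor_comp_rTensor]
  obtain ⟨y, hy⟩ := (rTensor_exact N₂ hfexact hfsurj _).mp this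
  have : g₂.lTensor M₁ y = 0 := by
    apply hfinj
    trans g₂.lTensor M₂ (g₁.lTensor M₂ x)
    · rw [← hy, ← LinearMap.comp_apply, ← LinearMap.comp_apply, LinearMap.rTensor_comp_lTensor,
        LinearMap.lTensor_comp_rTensor]
    rw [← LinearMap.comp_apply, ← LinearMap.lTensor_comp, hgexact.linearMap_comp_eq_zero]
    simp
  obtain ⟨z, rfl⟩ := (lTensor_exact _ hgexact hgsurj _).mp this
  obtain rfl : f₁.rTensor N₁ z = x := by
    apply hginj
    simp only [← hy, ← LinearMap.comp_apply, ← LinearMap.comp_apply, LinearMap.lTensor_comp_rTensor,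
      LinearMap.rTensor_comp_lTensor]
  rw [← LinearMap.comp_apply, ← LinearMap.rTensor_comp, hfexact.linearMap_comp_eq_zero]
  simp

lemma Module.Flat.ker_of_surjective {R N P : Type*} [CommRing R]
    [AddCommGroup N] [Module R N] [AddCommGroup P] [Module R P]
    [Module.Flat R N] [Module.Flat R P]
    (φ : N →ₗ[R] P) (hφ : Function.Surjective φ) :
    Module.Flat R (LinearMap.ker φ) := by
  set K := LinearMap.ker φ with hK
  have hexact : Function.Exact K.subtype φ := LinearMap.exact_subtype_ker_map φ
  rw [Module.Flat.iff_rTensor_injective']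
  intro I
  -- free presentation of I
  set F := (↥I →₀ R) with hF
  set q : F →ₗ[R] ↥I := Finsupp.linearCombination R _root_.id with hq
  have hqsurj : Function.Surjective q := Finsupp.linearCombination_id_surjective R ↥I
  have hqexact : Function.Exact (LinearMap.ker q).subtype q :=
    LinearMap.exact_subtype_ker_map q
  -- key: I ⊗ K → I ⊗ N is injective
  have hA : Function.Injective (K.subtype.lTensor ↥I) :=
    lTensor_injective_of_exact_of_exact_of_rTensor_injective' (M₁ := LinearMap.ker q) (M₂ := F) (M₃ := ↥I)
      hqexact hqsurj hexact hφ
      (Module.Flat.rTensor_preserves_injective_linearMap (LinearMap.ker q).subtype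
        (LinearMap.ker q).injective_subtype)
      (Module.Flat.lTensor_preserves_injective_linearMap K.subtype K.injective_subtype)
  -- conclude
  intro x y hxy
  apply hA
  apply Module.Flat.rTensor_preserves_injective_linearMap (M := N) I.subtype
    I.injective_subtype
  have h1 : (I.subtype.rTensor N) ∘ₗ (K.subtype.lTensor ↥I) =
      (K.subtype.lTensor R) ∘ₗ (I.subtype.rTensor K) := by
    rw [LinearMap.rTensor_comp_lTensor, LinearMap.lTensor_comp_rTensor]
  have h2 := congrArg (fun f : ↥I ⊗[R] ↥K →ₗ[R] R ⊗[R] N => f x) h1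
  have h3 := congrArg (fun f : ↥I ⊗[R] ↥K →ₗ[R] R ⊗[R] N => f y) h1
  simp only [LinearMap.comp_apply] at h2 h3
  rw [h2, h3, hxy]

/-- With `A = A' ×_{B'} B` the fiber product of `R`-algebras, `B'` flat over `R`,
`(b, a') ↦ g b - f a'` surjective, and `A'`, `B` flat over `R`, the fiber product `A` is flat
over `R`. -/
theorem fiber_product_flat
    (R A' B B' A : Type*) [CommRing R]
    [CommRing A'] [CommRing B] [CommRing B'] [CommRing A]
    [Algebra R A'] [Algebra R B] [Algebra R B'] [Algebra R A]
    (f : A' →ₐ[R] B') (g : B →ₐ[R] B')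
    (p₁ : A →ₐ[R] B) (p₂ : A →ₐ[R] A')
    (hcomm : ∀ a : A, g (p₁ a) = f (p₂ a))
    (hfib : ∀ (b : B) (a' : A'), g b = f a' → ∃! a : A, p₁ a = b ∧ p₂ a = a')
    [Module.Flat R B'] [Module.Flat R A'] [Module.Flat R B]
    (hsurj : Function.Surjective (fun x : B × A' => g x.1 - f x.2)) :
    Module.Flat R A := by
  -- the linear map (b, a') ↦ g b - f a'
  set φ : (B × A') →ₗ[R] B' :=
    g.toLinearMap.comp (LinearMap.fst R B A') - f.toLinearMap.comp (LinearMap.snd R B A')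
    with hφdef
  have hφ : Function.Surjective φ := by
    intro y
    obtain ⟨x, hx⟩ := hsurj y
    exact ⟨x, hx⟩
  -- A embeds as ker φ
  set ψ : A →ₗ[R] B × A' := p₁.toLinearMap.prod p₂.toLinearMap with hψdef
  have hψinj : Function.Injective ψ := by
    intro a₁ a₂ h
    have h1 : p₁ a₁ = p₁ a₂ := congrArg Prod.fst h
    have h2 : p₂ a₁ = p₂ a₂ := congrArg Prod.snd h
    obtain ⟨a, _, huniq⟩ := hfib (p₁ a₁) (p₂ a₁) (hcomm a₁)
    rw [huniq a₁ ⟨rfl, rfl⟩, huniq a₂ ⟨h1.symm, h2.symm⟩]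
  have hrange : LinearMap.range ψ = LinearMap.ker φ := by
    ext x
    constructor
    · rintro ⟨a, rfl⟩
      simp [hψdef, hφdef, sub_eq_zero, hcomm a]
    · intro hx
      have : g x.1 = f x.2 := by
        have := hx
        simp only [hφdef, LinearMap.mem_ker, LinearMap.sub_apply, LinearMap.comp_apply,
          LinearMap.fst_apply, LinearMap.snd_apply, AlgHom.toLinearMap_apply,
          sub_eq_zero] at this
        exact this
      obtain ⟨a, ⟨ha1, ha2⟩, _⟩ := hfib x.1 x.2 this
      exact ⟨a, by simp [hψdef, ha1, ha2]⟩
  have hker : Module.Flat R (LinearMap.ker φ) := by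
    have : Module.Flat R (B × A') := Module.Flat.prod'
    exact Module.Flat.ker_of_surjective φ hφ
  have e : A ≃ₗ[R] LinearMap.ker φ :=
    (LinearEquiv.ofInjective ψ hψinj).trans (LinearEquiv.ofEq _ _ hrange)
  exact Module.Flat.of_linearEquiv e
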